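/- For any 1 ≤ l' < l ≤ k and distinct reals μ_1,...,μ_k: Σ_{i=l'}^{l} ∏_{t=1}^{l'-1}(μ_i - μ_t) / ∏_{t=1, t≠i}^{l}(μ_i - μ_t) = 0, while for l' = l the sum equals 1. -/

import Mathlib

open Polynomial Finset

/-- Entrywise inverse relation for the Wang-expansion matrices: for pairwise
distinct reals `μ_1,…,μ_k` and `1 ≤ l' ≤ l ≤ k`,
`Σ_{i=l'}^{l} ∏_{t=1}^{l'-1}(μ_i - μ_t) / ∏_{t=1,t≠i}^{l}(μ_i - μ_t)`
equals `1` when `l' = l` and `0` when `l' < l`. -/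
theorem wang_matrix_entry_inverse (k : ℕ) (μ : ℕ → ℝ)
    (hμ : Set.InjOn μ (Set.Icc 1 k)) (l' l : ℕ) (hl' : 1 ≤ l') (hl'l : l' ≤ l)
    (hl : l ≤ k) :
    ∑ i ∈ Finset.Icc l' l,
        (∏ t ∈ Finset.Icc 1 (l' - 1), (μ i - μ t)) /
          ∏ t ∈ (Finset.Icc 1 l).erase i, (μ i - μ t) =
      if l' = l then 1 else 0 := by
  set s : Finset ℕ := Finset.Icc 1 l with hs
  have hss : Set.InjOn μ ↑s := by
    rw [hs, Finset.coe_Icc]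
    exact hμ.mono (Set.Icc_subset_Icc le_rfl hl)
  set P : ℝ[X] := ∏ t ∈ Finset.Icc 1 (l' - 1), (X - C (μ t)) with hP
  have hPmonic : P.Monic := monic_prod_of_monic _ _ fun t _ => monic_X_sub_C _
  have hPdeg : P.natDegree = l' - 1 := by
    rw [hP, natDegree_prod_of_monic _ _ fun t _ => monic_X_sub_C _]
    simp [Nat.card_Icc]
  have hcard : #s = l := by simp [hs, Nat.card_Icc]
  have hdeglt : P.degree < (#s : ℕ) := by
    rw [degree_eq_natDegree hPmonic.ne_zero, hPdeg, hcard]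
    exact_mod_cast lt_of_lt_of_le (Nat.sub_lt hl' one_pos) hl'l
  have key := Lagrange.eq_interpolate hss hdeglt
  -- take coefficient l - 1 on both sides
  have hcoeffP : P.coeff (l - 1) = if l' = l then 1 else 0 := by
    rcases eq_or_lt_of_le hl'l with h | h
    · subst h
      rw [if_pos rfl, ← hPdeg]
      exact hPmonic.coeff_natDegree
    · rw [if_neg h.ne]
      apply coeff_eq_zero_of_natDegree_lt
      rw [hPdeg]
      omega
  have hbasis : ∀ i ∈ s, (Lagrange.basis s μ i).coeff (l - 1) =
      (∏ t ∈ s.erase i, (μ i - μ t))⁻¹ := by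
    intro i hi
    have hnd : (Lagrange.basis s μ i).natDegree = l - 1 := by
      rw [Lagrange.natDegree_basis hss hi, hcard]
    rw [← hnd, ← Polynomial.leadingCoeff, Lagrange.basis, leadingCoeff_prod]
    rw [← Finset.prod_inv_distrib]
    refine Finset.prod_congr rfl fun j hj => ?_
    have hne : μ i ≠ μ j := by
      intro h
      exact (Finset.mem_erase.mp hj).1 (hss (Finset.mem_erase.mp hj).2 hi h.symm)
    rw [Lagrange.basisDivisor, leadingCoeff_mul, leadingCoeff_C,
      (monic_X_sub_C _).leadingCoeff, mul_one]
  have hsum : P.coeff (l - 1) =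
      ∑ i ∈ s, P.eval (μ i) * (∏ t ∈ s.erase i, (μ i - μ t))⁻¹ := by
    conv_lhs => rw [key]
    rw [Lagrange.interpolate_apply, finset_sum_coeff]
    exact Finset.sum_congr rfl fun i hi => by
      rw [coeff_C_mul, hbasis i hi]
  -- restrict sum from s to Icc l' l
  have hsub : Finset.Icc l' l ⊆ s := Finset.Icc_subset_Icc hl' le_rfl
  have hvanish : ∀ i ∈ s, i ∉ Finset.Icc l' l →
      P.eval (μ i) * (∏ t ∈ s.erase i, (μ i - μ t))⁻¹ = 0 := by
    intro i hi hni
    have hi' : i ∈ Finset.Icc 1 (l' - 1) := by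
      simp only [hs, Finset.mem_Icc] at hi hni ⊢
      omega
    have : P.eval (μ i) = 0 := by
      rw [hP, eval_prod]
      exact Finset.prod_eq_zero hi' (by simp)
    rw [this, zero_mul]
  have hrestrict : ∑ i ∈ s, P.eval (μ i) * (∏ t ∈ s.erase i, (μ i - μ t))⁻¹ =
      ∑ i ∈ Finset.Icc l' l, P.eval (μ i) * (∏ t ∈ s.erase i, (μ i - μ t))⁻¹ :=
    (Finset.sum_subset hsub (fun i hi hni => hvanish i hi hni)).symm
  rw [← hcoeffP, hsum, hrestrict]
  refine Finset.sum_congr rfl fun i hi => ?_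
  rw [div_eq_mul_inv, hP, eval_prod]
  simp
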